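/- Suppose the interpolative fusion T∪* exists, M∪ and N∪ are models of T∪*, and M_i is an elementary substructure of N_i for all i ∈ I. Then M∪ is an elementary substructure of N∪. -/

import Mathlib

namespace InterpolativeFusion

open FirstOrder FirstOrder.Language Set

universe w

variable {ι : Type*} {M : Type*} {N : Type*}

/-! ### Wrappers for working with explicit structures -/

/-- Realization of a formula with respect to an explicitly given structure. -/
def RealizeWith (L0 : Language) (S : L0.Structure M) {α : Type*} (φ : L0.Formula α)
    (x : α → M) : Prop :=
  letI := S
  φ.Realize x

/-- Definability (with arbitrary parameters) with respect to an explicitly given structure. -/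
def DefinableWith (L0 : Language) (S : L0.Structure M) {n : ℕ} (s : Set (Fin n → M)) : Prop :=
  letI := S
  Set.Definable (Set.univ : Set M) L0 s

/-- `M` is a model of `T0`, with respect to an explicitly given structure. -/
def ModelsWith (L0 : Language) (S : L0.Structure M) (T0 : L0.Theory) : Prop :=
  letI := S
  M ⊨ T0

/-- `f : M → N` is an `L0`-embedding with respect to explicitly given structures. -/
def IsEmbeddingWith (L0 : Language) (SM : L0.Structure M) (SN : L0.Structure N)
    (f : M → N) : Prop :=
  letI := SM
  letI := SN
  ∃ g : M ↪[L0] N, ⇑g = f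

/-- `f : M → N` is an elementary map with respect to explicitly given structures. -/
def IsElementaryWith (L0 : Language) (SM : L0.Structure M) (SN : L0.Structure N)
    (f : M → N) : Prop :=
  ∀ (k : ℕ) (φ : L0.Formula (Fin k)) (a : Fin k → M),
    RealizeWith L0 SM φ a ↔ RealizeWith L0 SN φ (f ∘ a)

/-! ### The languages of an interpolative fusion setting

Each `L i` consists of the common base language `Lcap` together with new symbols `L' i`,
which are pairwise disjoint for distinct indices, so that `L i ∩ L j = Lcap` for `i ≠ j`. -/

/-- The language of the new symbols of all the languages `L' i`, combined disjointly. -/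
def sigmaLang (L' : ι → Language) : Language where
  Functions n := Σ i : ι, (L' i).Functions n
  Relations n := Σ i : ι, (L' i).Relations n

/-- `L∪`: the base language together with all of the new symbols. -/
def unionLang (Lcap : Language) (L' : ι → Language) : Language :=
  Lcap.sum (sigmaLang L')

/-- `L i`: the base language together with the new symbols of index `i`. -/
def langI (Lcap : Language) (L' : ι → Language) (i : ι) : Language :=
  Lcap.sum (L' i)

/-- The inclusion of the new symbols of index `i` into the combined new symbols. -/
def sigmaIncl (L' : ι → Language) (i : ι) : L' i →ᴸ sigmaLang L' where
  onFunction := fun _ f => ⟨i, f⟩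
  onRelation := fun _ r => ⟨i, r⟩

/-- The inclusion `Lcap →ᴸ L i`. -/
def inclCapI (Lcap : Language) (L' : ι → Language) (i : ι) : Lcap →ᴸ langI Lcap L' i :=
  LHom.sumInl

/-- The inclusion `L i →ᴸ L∪`. -/
def inclI (Lcap : Language) (L' : ι → Language) (i : ι) :
    langI Lcap L' i →ᴸ unionLang Lcap L' :=
  LHom.sumMap (LHom.id Lcap) (sigmaIncl L' i)

/-- The inclusion `Lcap →ᴸ L∪`. -/
def inclCap (Lcap : Language) (L' : ι → Language) : Lcap →ᴸ unionLang Lcap L' :=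
  LHom.sumInl

/-- The reduct of an `L∪`-structure to `L i`. -/
def structI (Lcap : Language) (L' : ι → Language) (i : ι)
    (Su : (unionLang Lcap L').Structure M) : (langI Lcap L' i).Structure M :=
  letI := Su
  (inclI Lcap L' i).reduct M

/-- The reduct of an `L∪`-structure to `Lcap`. -/
def structCap (Lcap : Language) (L' : ι → Language)
    (Su : (unionLang Lcap L').Structure M) : Lcap.Structure M :=
  letI := Su
  (inclCap Lcap L').reduct M

/-- The reduct of an `L i`-structure to `Lcap`. -/
def structCapOfI (Lcap : Language) (L' : ι → Language) (i : ι)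
    (S : (langI Lcap L' i).Structure M) : Lcap.Structure M :=
  letI := S
  (inclCapI Lcap L' i).reduct M

/-! ### Separation and interpolative structures -/

/-- A family of sets, indexed by a finite `J ⊆ ι`, is separated if each member can be enlarged to
an `M∩`-definable set in such a way that the enlarged sets have empty total intersection. -/
def Separated (Lcap : Language) (L' : ι → Language)
    (Su : (unionLang Lcap L').Structure M) {n : ℕ} (J : Finset ι)
    (X : ι → Set (Fin n → M)) : Prop :=
  ∃ Y : ι → Set (Fin n → M),
    (∀ i ∈ J, DefinableWith Lcap (structCap Lcap L' Su) (Y i) ∧ X i ⊆ Y i) ∧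
      (⋂ i ∈ J, Y i) = ∅

/-- An `L∪`-structure is interpolative if any finite family of sets, each definable in one of the
reducts `M i`, has nonempty intersection if and only if the family is not separated. -/
def Interpolative (Lcap : Language) (L' : ι → Language)
    (Su : (unionLang Lcap L').Structure M) : Prop :=
  ∀ (n : ℕ) (J : Finset ι) (X : ι → Set (Fin n → M)),
    (∀ i ∈ J, DefinableWith (langI Lcap L' i) (structI Lcap L' i Su) (X i)) →
      ((⋂ i ∈ J, X i).Nonempty ↔ ¬ Separated Lcap L' Su J X)

/-! ### Theories -/

/-- The union theory `T∪`. -/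
def unionTheory (Lcap : Language) (L' : ι → Language)
    (T : ∀ i : ι, (langI Lcap L' i).Theory) : (unionLang Lcap L').Theory :=
  ⋃ i : ι, (inclI Lcap L' i).onTheory (T i)

/-- All of the theories `T i` have the same set of `Lcap`-consequences. -/
def SameCapConsequences (Lcap : Language) (L' : ι → Language)
    (T : ∀ i : ι, (langI Lcap L' i).Theory) : Prop :=
  ∀ (i j : ι) (σ : Lcap.Sentence),
    (T i) ⊨ᵇ ((inclCapI Lcap L' i).onSentence σ) ↔ (T j) ⊨ᵇ ((inclCapI Lcap L' j).onSentence σ)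

/-- `Tstar` axiomatizes the class of interpolative models of the union theory, i.e. `Tstar` is
the interpolative fusion of the theories `T i`. -/
def AxiomatizesInterpolative (Lcap : Language) (L' : ι → Language)
    (T : ∀ i : ι, (langI Lcap L' i).Theory) (Tstar : (unionLang Lcap L').Theory) : Prop :=
  ∀ (M : Type w) (Su : (unionLang Lcap L').Structure M),
    ModelsWith (unionLang Lcap L') Su Tstar ↔
      (ModelsWith (unionLang Lcap L') Su (unionTheory Lcap L' T) ∧
        Interpolative Lcap L' Su)


end InterpolativeFusion

namespace InterpolativeFusion

open FirstOrder FirstOrder.Language Set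

section Aux

universe ua ub

variable {M : Type*} {N : Type*}

/-- Elementary maps transfer realization of formulas with arbitrary variable types. -/
theorem IsElementaryWith.realize_iff' {L0 : Language} {SM : L0.Structure M}
    {SN : L0.Structure N} {f : M → N} (h : IsElementaryWith L0 SM SN f)
    {α : Type*} (φ : L0.Formula α) (v : α → M) :
    @Formula.Realize L0 M SM α φ v ↔ @Formula.Realize L0 N SN α φ (f ∘ v) := by
  classical
  have hsub : ↑φ.freeVarFinset ⊆ (↑φ.freeVarFinset : Set α) := subset_rfl
  haveI : Fintype ↥(↑φ.freeVarFinset : Set α) := (φ.freeVarFinset.finite_toSet).fintype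
  let e : ↥(↑φ.freeVarFinset : Set α) ≃ Fin (Fintype.card ↥(↑φ.freeVarFinset : Set α)) :=
    Fintype.equivFin _
  let ψ : L0.Formula (Fin (Fintype.card ↥(↑φ.freeVarFinset : Set α))) :=
    BoundedFormula.relabelEquiv e (φ.restrictFreeVar (Set.inclusion hsub))
  have key1 : ∀ (w : α → M),
      @Formula.Realize L0 M SM _ ψ (fun j => w ↑(e.symm j)) ↔
        @Formula.Realize L0 M SM _ φ w := by
    intro w
    letI := SM
    have h1 : (fun j => w ↑(e.symm j)) ∘ e = w ∘ (↑) := by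
      funext u
      simp
    show BoundedFormula.Realize _ _ _ ↔ BoundedFormula.Realize _ _ _
    rw [BoundedFormula.realize_relabelEquiv, h1,
      BoundedFormula.realize_restrictFreeVar' hsub]
  have key2 : ∀ (w : α → N),
      @Formula.Realize L0 N SN _ ψ (fun j => w ↑(e.symm j)) ↔
        @Formula.Realize L0 N SN _ φ w := by
    intro w
    letI := SN
    have h1 : (fun j => w ↑(e.symm j)) ∘ e = w ∘ (↑) := by
      funext u
      simp
    show BoundedFormula.Realize _ _ _ ↔ BoundedFormula.Realize _ _ _
    rw [BoundedFormula.realize_relabelEquiv, h1,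
      BoundedFormula.realize_restrictFreeVar' hsub]
  have h2 := h _ ψ (fun j => v ↑(e.symm j))
  exact (key1 v).symm.trans ((h2 : _ ↔ _).trans (key2 (f ∘ v)))

/-- Elementary maps transfer realization of bounded formulas. -/
theorem IsElementaryWith.realize_bf {L0 : Language} {SM : L0.Structure M}
    {SN : L0.Structure N} {f : M → N} (h : IsElementaryWith L0 SM SN f)
    {α : Type*} {n : ℕ} (φ : L0.BoundedFormula α n) (v : α → M) (xs : Fin n → M) :
    @BoundedFormula.Realize L0 M SM α n φ v xs ↔
      @BoundedFormula.Realize L0 N SN α n φ (f ∘ v) (f ∘ xs) := by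
  letI := SM; letI := SN
  have h1 : f ∘ Sum.elim v xs = Sum.elim (f ∘ v) (f ∘ xs) := by
    funext x; cases x <;> rfl
  have := h.realize_iff' φ.toFormula (Sum.elim v xs)
  rw [BoundedFormula.realize_toFormula, BoundedFormula.realize_toFormula, h1] at this
  have e1 : Sum.elim v xs ∘ Sum.inl = v := funext fun _ => rfl
  have e2 : Sum.elim v xs ∘ Sum.inr = xs := funext fun _ => rfl
  have e3 : Sum.elim (f ∘ v) (f ∘ xs) ∘ Sum.inl = f ∘ v := funext fun _ => rfl
  have e4 : Sum.elim (f ∘ v) (f ∘ xs) ∘ Sum.inr = f ∘ xs := funext fun _ => rfl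
  rwa [e1, e2, e3, e4] at this

theorem IsElementaryWith.nonempty_iff {L0 : Language} {SM : L0.Structure M}
    {SN : L0.Structure N} {f : M → N} (h : IsElementaryWith L0 SM SN f) :
    Nonempty M ↔ Nonempty N := by
  letI := SM; letI := SN
  have h2 := h 0 (BoundedFormula.ex
    ((Term.var (Sum.inr (0 : Fin 1))).bdEqual (Term.var (Sum.inr 0)))) default
  simp only [RealizeWith, Formula.Realize, BoundedFormula.realize_ex,
    BoundedFormula.realize_bdEqual] at h2
  constructor
  · rintro ⟨a⟩
    obtain ⟨b, -⟩ := h2.mp ⟨a, trivial⟩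
    exact ⟨b⟩
  · rintro ⟨b⟩
    obtain ⟨a, -⟩ := h2.mpr ⟨b, trivial⟩
    exact ⟨a⟩

theorem IsElementaryWith.injective {L0 : Language} {SM : L0.Structure M}
    {SN : L0.Structure N} {f : M → N} (h : IsElementaryWith L0 SM SN f) :
    Function.Injective f := by
  intro x y hxy
  letI := SM; letI := SN
  have h2 := h 2 (Term.equal (Term.var 0) (Term.var 1)) ![x, y]
  simp only [RealizeWith, Formula.realize_equal, Term.realize_var] at h2
  have := h2.mpr (by simpa using hxy)
  simpa using this

variable {ι : Type*} [Nonempty ι] {Lcap : Language} {L' : ι → Language}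

theorem exists_function {l : ℕ} (F : (unionLang Lcap L').Functions l) :
    ∃ (i : ι) (F' : (langI Lcap L' i).Functions l), (inclI Lcap L' i).onFunction F' = F := by
  rcases F with Fc | Fs
  · exact ⟨Classical.arbitrary ι, Sum.inl Fc, rfl⟩
  · exact ⟨Fs.1, Sum.inr Fs.2, rfl⟩

theorem exists_relation {l : ℕ} (R : (unionLang Lcap L').Relations l) :
    ∃ (i : ι) (R' : (langI Lcap L' i).Relations l), (inclI Lcap L' i).onRelation R' = R := by
  rcases R with Rc | Rs
  · exact ⟨Classical.arbitrary ι, Sum.inl Rc, rfl⟩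
  · exact ⟨Rs.1, Sum.inr Rs.2, rfl⟩

theorem term_map {A B : Type*} {SA : (unionLang Lcap L').Structure A}
    {SB : (unionLang Lcap L').Structure B} {f : A → B}
    (hfi : ∀ i, IsElementaryWith (langI Lcap L' i) (structI Lcap L' i SA)
      (structI Lcap L' i SB) f)
    {α : Type*} (t : (unionLang Lcap L').Term α) : ∀ (v : α → A),
    f (@Term.realize _ A SA _ v t) = @Term.realize _ B SB _ (f ∘ v) t := by
  induction t with
  | var a => intro v; rfl
  | @func l F ts ih =>
    intro v
    obtain ⟨i, F', rfl⟩ := exists_function (ι := ι) (Lcap := Lcap) (L' := L') F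
    have hcomm : ∀ y : Fin l → A,
        f (@Structure.funMap _ A (structI Lcap L' i SA) l F' y)
          = @Structure.funMap _ B (structI Lcap L' i SB) l F' (f ∘ y) := by
      intro y
      have h3 := (hfi i).realize_iff'
        (Term.equal (Term.func F' fun j => Term.var (Fin.castSucc j)) (Term.var (Fin.last l)))
        (Fin.snoc y (@Structure.funMap _ A (structI Lcap L' i SA) l F' y))
      letI := structI Lcap L' i SA
      letI := structI Lcap L' i SB
      simp only [Formula.realize_equal, Term.realize_func, Term.realize_var,
        Function.comp_apply, Fin.snoc_castSucc, Fin.snoc_last] at h3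
      exact (h3.mp trivial).symm
    show f (@Structure.funMap _ A (structI Lcap L' i SA) l F' fun j => Term.realize v (ts j))
      = @Structure.funMap _ B (structI Lcap L' i SB) l F' fun j => Term.realize (f ∘ v) (ts j)
    rw [hcomm]
    congr 1
    funext j
    exact ih j v

/-- Key lemma: joint witnesses for finitely many formulas, one from each language, transfer
backwards along an all-`i`-elementary map between interpolative structures. -/
theorem witness_transfer {A B : Type*}
    {SA : (unionLang Lcap L').Structure A} {SB : (unionLang Lcap L').Structure B} {f : A → B}
    (hfi : ∀ i, IsElementaryWith (langI Lcap L' i) (structI Lcap L' i SA)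
      (structI Lcap L' i SB) f)
    (hint : Interpolative Lcap L' SA)
    {K : ℕ} (J : Finset ι)
    (Θ : ∀ i : ι, (langI Lcap L' i).Formula (↥(univ : Set A) ⊕ Fin K))
    (c : Fin K → B)
    (hc : ∀ i ∈ J, @Formula.Realize _ B (structI Lcap L' i SB) _ (Θ i)
      (Sum.elim (fun m => f ↑m) c)) :
    ∃ e : Fin K → A, ∀ i ∈ J, @Formula.Realize _ A (structI Lcap L' i SA) _ (Θ i)
      (Sum.elim (↑) e) := by
  classical
  by_contra hno
  push_neg at hno
  set X : ι → Set (Fin K → A) := fun i =>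
    {w | @Formula.Realize _ A (structI Lcap L' i SA) _ (Θ i) (Sum.elim (↑) w)} with hX
  have hdef : ∀ i ∈ J, DefinableWith (langI Lcap L' i) (structI Lcap L' i SA) (X i) := by
    intro i _
    letI := structI Lcap L' i SA
    have : Set.Definable (univ : Set A) (langI Lcap L' i) (X i) :=
      (Set.definable_iff_exists_formula_sum).mpr ⟨Θ i, rfl⟩
    exact this
  have hint2 := hint K J X hdef
  have hempty : ¬ (⋂ i ∈ J, X i).Nonempty := by
    rintro ⟨w, hw⟩
    simp only [Set.mem_iInter] at hw
    obtain ⟨i, hiJ, hi⟩ := hno w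
    exact hi (hw i hiJ)
  have hsep : Separated Lcap L' SA J X := not_not.mp (fun hs => hempty (hint2.mpr hs))
  obtain ⟨Y, hY, hYe⟩ := hsep
  have hψ0 : ∀ i : ι, ∃ ψ : Lcap.Formula (↥(univ : Set A) ⊕ Fin K), i ∈ J →
      Y i = {w | @Formula.Realize _ A (structCap Lcap L' SA) _ ψ (Sum.elim (↑) w)} := by
    intro i
    by_cases hi : i ∈ J
    · letI := structCap Lcap L' SA
      have hd : Set.Definable (univ : Set A) Lcap (Y i) := (hY i hi).1
      rw [Set.definable_iff_exists_formula_sum] at hd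
      obtain ⟨ψ, hψ⟩ := hd
      exact ⟨ψ, fun _ => hψ⟩
    · exact ⟨⊥, fun h => absurd h hi⟩
  choose ψ hψ using hψ0
  have hcont : ∀ i ∈ J, @Formula.Realize _ B (structCap Lcap L' SB) _ (ψ i)
      (Sum.elim (fun m => f ↑m) c) := by
    intro i hi
    letI SIA := structI Lcap L' i SA
    letI SIB := structI Lcap L' i SB
    letI SCA := structCap Lcap L' SA
    letI SCB := structCap Lcap L' SB
    haveI : @LHom.IsExpansionOn _ _ (inclCapI Lcap L' i) A SCA SIA :=
      LHom.isExpansionOn_reduct (inclCapI Lcap L' i) A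
    haveI : @LHom.IsExpansionOn _ _ (inclCapI Lcap L' i) B SCB SIB :=
      LHom.isExpansionOn_reduct (inclCapI Lcap L' i) B
    have hΦA : @Formula.Realize _ A SIA _
        (Formula.iAlls (Fin K) ((Θ i).imp ((inclCapI Lcap L' i).onFormula (ψ i)))) (↑) := by
      rw [Formula.realize_iAlls]
      intro w
      rw [Formula.realize_imp]
      intro hθ
      have hwX : w ∈ X i := hθ
      have hwY : w ∈ Y i := (hY i hi).2 hwX
      rw [hψ i hi] at hwY
      rw [LHom.realize_onFormula]
      exact hwY
    have h5 := ((hfi i).realize_iff'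
      (Formula.iAlls (Fin K) ((Θ i).imp ((inclCapI Lcap L' i).onFormula (ψ i)))) (↑)).mp hΦA
    rw [Formula.realize_iAlls] at h5
    have h6 := h5 c
    rw [Formula.realize_imp, LHom.realize_onFormula] at h6
    exact h6 (hc i hi)
  have hEA : @Formula.Realize _ A (structI Lcap L' (Classical.arbitrary ι) SA) _
      ((inclCapI Lcap L' (Classical.arbitrary ι)).onFormula
        (Formula.not (Formula.iExs (Fin K) ((J.toList.map ψ).foldr (· ⊓ ·) ⊤)))) (↑) := by
    letI := structI Lcap L' (Classical.arbitrary ι) SA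
    letI := structCap Lcap L' SA
    haveI : @LHom.IsExpansionOn _ _ (inclCapI Lcap L' (Classical.arbitrary ι)) A
        (structCap Lcap L' SA) (structI Lcap L' (Classical.arbitrary ι) SA) :=
      LHom.isExpansionOn_reduct (inclCapI Lcap L' (Classical.arbitrary ι)) A
    rw [LHom.realize_onFormula, Formula.realize_not, Formula.realize_iExs]
    rintro ⟨w, hw⟩
    have hw2 := (BoundedFormula.realize_foldr_inf (J.toList.map ψ) _ _).mp hw
    have hwAll : w ∈ ⋂ i ∈ J, Y i := by
      refine Set.mem_iInter₂.mpr fun i hi => ?_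
      rw [hψ i hi]
      exact hw2 (ψ i) (List.mem_map.mpr ⟨i, Finset.mem_toList.mpr hi, rfl⟩)
    rw [hYe] at hwAll
    exact hwAll
  have hEB := ((hfi (Classical.arbitrary ι)).realize_iff' _ ((↑) : ↥(univ : Set A) → A)).mp hEA
  letI := structI Lcap L' (Classical.arbitrary ι) SB
  letI := structCap Lcap L' SB
  haveI : @LHom.IsExpansionOn _ _ (inclCapI Lcap L' (Classical.arbitrary ι)) B
      (structCap Lcap L' SB) (structI Lcap L' (Classical.arbitrary ι) SB) :=
    LHom.isExpansionOn_reduct (inclCapI Lcap L' (Classical.arbitrary ι)) B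
  rw [LHom.realize_onFormula, Formula.realize_not, Formula.realize_iExs] at hEB
  apply hEB
  refine ⟨c, ?_⟩
  refine (BoundedFormula.realize_foldr_inf (J.toList.map ψ) _ _).mpr fun φ' hφ' => ?_
  obtain ⟨i, hi, rfl⟩ := List.mem_map.mp hφ'
  exact hcont i (Finset.mem_toList.mp hi)

/-- The zigzag lemma: given an all-`i`-elementary map `f : A → B` with `A` interpolative, there
is a fully elementary extension of `A` into which `B` maps all-`i`-elementarily over `f`. -/
theorem zigzag {A : Type ua} {B : Type ub} [Nonempty A]
    {SA : (unionLang Lcap L').Structure A} {SB : (unionLang Lcap L').Structure B} {f : A → B}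
    (hfi : ∀ i, IsElementaryWith (langI Lcap L' i) (structI Lcap L' i SA)
      (structI Lcap L' i SB) f)
    (hint : Interpolative Lcap L' SA) :
    ∃ (P : Type (max ua ub)) (SP : (unionLang Lcap L').Structure P) (g : B → P),
      (∀ i, IsElementaryWith (langI Lcap L' i) (structI Lcap L' i SB)
        (structI Lcap L' i SP) g) ∧
      IsElementaryWith (unionLang Lcap L') SA SP (g ∘ f) := by
  classical
  have hinj : Function.Injective f := (hfi (Classical.arbitrary ι)).injective
  let T0 := B → A
  let ρ : B → A := fun b => if h : ∃ a, f a = b then h.choose else Classical.arbitrary A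
  have hρ : ∀ a, ρ (f a) = a := by
    intro a
    have h : ∃ a', f a' = f a := ⟨a, rfl⟩
    have h2 : ρ (f a) = h.choose := dif_pos h
    rw [h2]
    exact hinj h.choose_spec
  let A0 : Set T0 := {h | ∀ a, h (f a) = a}
  let As : (Σ (i : ι) (k : ℕ), ((langI Lcap L' i).Formula (Fin k)) × (Fin k → B)) → Set T0 :=
    fun r => {h | @Formula.Realize _ A (structI Lcap L' r.1 SA) _ r.2.2.1 (h ∘ r.2.2.2)}
  let sat : (Σ (i : ι) (k : ℕ), ((langI Lcap L' i).Formula (Fin k)) × (Fin k → B)) → Prop :=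
    fun r => @Formula.Realize _ B (structI Lcap L' r.1 SB) _ r.2.2.1 r.2.2.2
  let S : Set (Set T0) := insert A0 (As '' {r | sat r})
  have hFIP : ∀ t ⊆ S, t.Finite → (⋂₀ t).Nonempty := by
    intro t hts htf
    have hchoice : ∀ s : ↥(t \ {A0}), ∃ r, sat r ∧ As r = ↑s := by
      rintro ⟨s, hs, hsne⟩
      rcases hts hs with h | h
      · exact absurd h hsne
      · obtain ⟨r, hr, hrs⟩ := h
        exact ⟨r, hr, hrs⟩
    choose F hFsat hFAs using hchoice
    haveI : Finite ↥(t \ {A0}) := (htf.subset diff_subset).to_subtype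
    haveI : Fintype ↥(t \ {A0}) := Fintype.ofFinite _
    let V : Set B := (⋃ s : ↥(t \ {A0}), Set.range (F s).2.2.2) \ Set.range f
    have hVfin : V.Finite :=
      Set.Finite.diff (Set.finite_iUnion fun s => Set.finite_range _)
    haveI := hVfin.fintype
    let K := Fintype.card ↥V
    let eV : ↥V ≃ Fin K := Fintype.equivFin _
    have hmemV : ∀ (s : ↥(t \ {A0})) (j : Fin (F s).2.1),
        (F s).2.2.2 j ∉ Set.range f → (F s).2.2.2 j ∈ V := fun s j hj =>
      ⟨Set.mem_iUnion.mpr ⟨s, Set.mem_range_self j⟩, hj⟩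
    let rmap : ∀ s : ↥(t \ {A0}), Fin (F s).2.1 → (↥(univ : Set A) ⊕ Fin K) := fun s j =>
      if h : (F s).2.2.2 j ∈ Set.range f then Sum.inl ⟨ρ ((F s).2.2.2 j), mem_univ _⟩
      else Sum.inr (eV ⟨(F s).2.2.2 j, hmemV s j h⟩)
    let θrel : ∀ s : ↥(t \ {A0}),
        (langI Lcap L' (F s).1).Formula (↥(univ : Set A) ⊕ Fin K) :=
      fun s => (F s).2.2.1.relabel (rmap s)
    let lst : List ↥(t \ {A0}) := (Finset.univ : Finset ↥(t \ {A0})).toList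
    let Θ : ∀ i : ι, (langI Lcap L' i).Formula (↥(univ : Set A) ⊕ Fin K) := fun i =>
      ((lst.filterMap (fun s => if h : (F s).1 = i then some (h ▸ θrel s) else none)).foldr
        (· ⊓ ·) ⊤)
    let J : Finset ι := Finset.univ.image (fun s : ↥(t \ {A0}) => (F s).1)
    have hc : ∀ i ∈ J, @Formula.Realize _ B (structI Lcap L' i SB) _ (Θ i)
        (Sum.elim (fun m => f ↑m) (fun j => ↑(eV.symm j))) := by
      intro i _
      letI := structI Lcap L' i SB
      refine (BoundedFormula.realize_foldr_inf _ _ _).mpr fun φ' hφ' => ?_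
      obtain ⟨s, hs, hsome⟩ := List.mem_filterMap.mp hφ'
      by_cases h : (F s).1 = i
      · rw [dif_pos h] at hsome
        obtain rfl := Option.some_injective _ hsome
        subst h
        show @Formula.Realize _ B (structI Lcap L' (F s).1 SB) _
          ((F s).2.2.1.relabel (rmap s)) _
        rw [Formula.realize_relabel]
        have harg : (Sum.elim (fun m : ↥(univ : Set A) => f ↑m) (fun j => ↑(eV.symm j)))
            ∘ (rmap s) = (F s).2.2.2 := by
          funext j
          by_cases hj : (F s).2.2.2 j ∈ Set.range f
          · simp only [rmap, dif_pos hj, Function.comp_apply, Sum.elim_inl]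
            obtain ⟨a, ha⟩ := hj
            rw [← ha, hρ]
          · simp only [rmap, dif_neg hj, Function.comp_apply, Sum.elim_inr,
              Equiv.symm_apply_apply]
        rw [harg]
        exact hFsat s
      · rw [dif_neg h] at hsome
        exact absurd hsome (by simp)
    obtain ⟨e, he⟩ := witness_transfer hfi hint J Θ (fun j => ↑(eV.symm j)) hc
    refine ⟨fun b => if hb : b ∈ V then e (eV ⟨b, hb⟩) else ρ b, ?_⟩
    intro s hs
    by_cases hsA0 : s = A0
    · subst hsA0
      intro a
      have hnv : f a ∉ V := fun hv => hv.2 ⟨a, rfl⟩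
      show (if hb : f a ∈ V then e (eV ⟨f a, hb⟩) else ρ (f a)) = a
      rw [dif_neg hnv]
      exact hρ a
    · have hsu : s ∈ t \ {A0} := ⟨hs, hsA0⟩
      letI := structI Lcap L' (F ⟨s, hsu⟩).1 SA
      have hAs2 : As (F ⟨s, hsu⟩) = s := hFAs ⟨s, hsu⟩
      rw [← hAs2]
      show @Formula.Realize _ A (structI Lcap L' (F ⟨s, hsu⟩).1 SA) _ (F ⟨s, hsu⟩).2.2.1 _
      have hi : (F ⟨s, hsu⟩).1 ∈ J := Finset.mem_image.mpr ⟨⟨s, hsu⟩, Finset.mem_univ _, rfl⟩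
      have h8 := he (F ⟨s, hsu⟩).1 hi
      have hmem : θrel ⟨s, hsu⟩ ∈ lst.filterMap
          (fun s' => if h : (F s').1 = (F ⟨s, hsu⟩).1 then some (h ▸ θrel s') else none) :=
        List.mem_filterMap.mpr ⟨⟨s, hsu⟩, by simp [lst], by rw [dif_pos rfl]⟩
      have h9 := (BoundedFormula.realize_foldr_inf _ _ _).mp h8 _ hmem
      have h10 : @Formula.Realize _ A (structI Lcap L' (F ⟨s, hsu⟩).1 SA) _
          ((F ⟨s, hsu⟩).2.2.1.relabel (rmap ⟨s, hsu⟩)) (Sum.elim (↑) e) := h9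
      rw [Formula.realize_relabel] at h10
      have harg : (Sum.elim ((↑) : ↥(univ : Set A) → A) e) ∘ (rmap ⟨s, hsu⟩)
          = (fun b => if hb : b ∈ V then e (eV ⟨b, hb⟩) else ρ b) ∘ (F ⟨s, hsu⟩).2.2.2 := by
        funext j
        by_cases hj : (F ⟨s, hsu⟩).2.2.2 j ∈ Set.range f
        · have hnv : (F ⟨s, hsu⟩).2.2.2 j ∉ V := fun hv => hv.2 hj
          simp only [rmap, dif_pos hj, Function.comp_apply, Sum.elim_inl, dif_neg hnv]
        · simp only [rmap, dif_neg hj, Function.comp_apply, Sum.elim_inr,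
            dif_pos (hmemV ⟨s, hsu⟩ j hj)]
      rw [harg] at h10
      exact h10
  haveI hgen : (Filter.generate S).NeBot := Filter.generate_neBot_iff.mpr hFIP
  let U : Ultrafilter T0 := Ultrafilter.of (Filter.generate S)
  have hU : ∀ s ∈ S, s ∈ U := fun s hs =>
    Ultrafilter.of_le (Filter.generate S)
      (Filter.mem_generate_iff.mpr ⟨{s}, singleton_subset_iff.mpr hs, finite_singleton s,
        by simp⟩)
  haveI : ∀ _ : T0, Nonempty A := fun _ => ‹Nonempty A›
  refine ⟨(U : Filter T0).Product (fun _ => A),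
    @Language.Ultraproduct.structure T0 (fun _ => A) U (unionLang Lcap L') (fun _ => SA),
    fun b => ((fun h : T0 => h b : ∀ _ : T0, A) : (U : Filter T0).Product (fun _ => A)),
    ?_, ?_⟩
  · intro i k θ a
    letI iSIA : ∀ _ : T0, (langI Lcap L' i).Structure A := fun _ => structI Lcap L' i SA
    have hlos := @Language.Ultraproduct.realize_formula_cast T0 (fun _ => A) U
      (langI Lcap L' i) iSIA _ (Fin k) θ (fun j => (fun h : T0 => h (a j)))
    have hiff : @Formula.Realize _ B (structI Lcap L' i SB) _ θ a ↔
        (∀ᶠ h : T0 in (U : Filter T0),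
          @Formula.Realize _ A (structI Lcap L' i SA) _ θ (fun j => h (a j))) := by
      by_cases hsat : @Formula.Realize _ B (structI Lcap L' i SB) _ θ a
      · have hmem : As ⟨i, k, θ, a⟩ ∈ U :=
          hU _ (Set.mem_insert_of_mem _ ⟨⟨i, k, θ, a⟩, hsat, rfl⟩)
        exact iff_of_true hsat (Filter.mem_of_superset hmem fun h hh => hh)
      · have hmem : As ⟨i, k, θ.not, a⟩ ∈ U :=
          hU _ (Set.mem_insert_of_mem _ ⟨⟨i, k, θ.not, a⟩,
            by
              letI := structI Lcap L' i SB
              show Formula.Realize θ.not a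
              rw [Formula.realize_not]
              exact hsat, rfl⟩)
        refine iff_of_false hsat ?_
        intro hcon
        have hno : ∀ᶠ h : T0 in (U : Filter T0),
            ¬ @Formula.Realize _ A (structI Lcap L' i SA) _ θ (fun j => h (a j)) := by
          refine Filter.mem_of_superset hmem fun h hh => ?_
          letI := structI Lcap L' i SA
          have h7 : Formula.Realize θ.not (h ∘ a) := hh
          rw [Formula.realize_not] at h7
          exact h7
        obtain ⟨h, h1, h2⟩ := (hcon.and hno).exists
        exact h2 h1
    exact hiff.trans hlos.symm
  · intro k φ a
    have hlos := @Language.Ultraproduct.realize_formula_cast T0 (fun _ => A) U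
      (unionLang Lcap L') (fun _ => SA) _ (Fin k) φ (fun j => (fun h : T0 => h (f (a j))))
    have hA0 : A0 ∈ U := hU _ (Set.mem_insert _ _)
    have hiff : @Formula.Realize _ A SA _ φ a ↔
        (∀ᶠ h : T0 in (U : Filter T0),
          @Formula.Realize _ A SA _ φ (fun j => h (f (a j)))) := by
      constructor
      · intro hreal
        refine Filter.mem_of_superset hA0 fun h hh => ?_
        have harg : (fun j => h (f (a j))) = a := funext fun j => hh (a j)
        show @Formula.Realize _ A SA _ φ (fun j => h (f (a j)))
        rw [harg]
        exact hreal
      · intro hev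
        obtain ⟨h, h1, h2⟩ := (hev.and (Filter.mem_of_superset hA0 fun h hh => hh :
          ∀ᶠ h : T0 in (U : Filter T0), ∀ a', h (f a') = a')).exists
        have harg : (fun j => h (f (a j))) = a := funext fun j => h2 (a j)
        rwa [harg] at h1
    exact hiff.trans hlos.symm

universe w

theorem transfer_all {T : ∀ i : ι, (langI Lcap L' i).Theory}
    {Tstar : (unionLang Lcap L').Theory}
    (hstar : AxiomatizesInterpolative.{w} Lcap L' T Tstar)
    {α : Type*} : ∀ {n : ℕ} (φ : (unionLang Lcap L').BoundedFormula α n)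
    (A B : Type w) (SA : (unionLang Lcap L').Structure A)
    (SB : (unionLang Lcap L').Structure B)
    (hA : ModelsWith (unionLang Lcap L') SA Tstar)
    (hB : ModelsWith (unionLang Lcap L') SB Tstar)
    (f : A → B)
    (hfi : ∀ i, IsElementaryWith (langI Lcap L' i) (structI Lcap L' i SA)
      (structI Lcap L' i SB) f)
    (v : α → A) (xs : Fin n → A),
    @BoundedFormula.Realize _ A SA _ _ φ v xs ↔
      @BoundedFormula.Realize _ B SB _ _ φ (f ∘ v) (f ∘ xs) := by
  intro n φ
  induction φ with
  | falsum =>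
    intro A B SA SB hA hB f hfi v xs
    exact Iff.rfl
  | @equal n t₁ t₂ =>
    intro A B SA SB hA hB f hfi v xs
    have hinj := (hfi (Classical.arbitrary ι)).injective
    have helim : f ∘ Sum.elim v xs = Sum.elim (f ∘ v) (f ∘ xs) :=
      funext fun x => by cases x <;> rfl
    have h1 : f (@Term.realize _ A SA _ (Sum.elim v xs) t₁)
        = @Term.realize _ B SB _ (Sum.elim (f ∘ v) (f ∘ xs)) t₁ := by
      rw [term_map hfi t₁ (Sum.elim v xs), helim]
    have h2 : f (@Term.realize _ A SA _ (Sum.elim v xs) t₂)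
        = @Term.realize _ B SB _ (Sum.elim (f ∘ v) (f ∘ xs)) t₂ := by
      rw [term_map hfi t₂ (Sum.elim v xs), helim]
    show @Term.realize _ A SA _ (Sum.elim v xs) t₁ = @Term.realize _ A SA _ (Sum.elim v xs) t₂
      ↔ @Term.realize _ B SB _ (Sum.elim (f ∘ v) (f ∘ xs)) t₁
        = @Term.realize _ B SB _ (Sum.elim (f ∘ v) (f ∘ xs)) t₂
    constructor
    · intro h
      rw [← h1, ← h2, h]
    · intro h
      apply hinj
      rw [h1, h2, h]
  | @rel n l R ts =>
    intro A B SA SB hA hB f hfi v xs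
    obtain ⟨i, R', rfl⟩ := exists_relation (ι := ι) (Lcap := Lcap) (L' := L') R
    have helim : f ∘ Sum.elim v xs = Sum.elim (f ∘ v) (f ∘ xs) :=
      funext fun x => by cases x <;> rfl
    have h4 := (hfi i).realize_iff' (R'.formula (fun j => Term.var j))
      (fun j => @Term.realize _ A SA _ (Sum.elim v xs) (ts j))
    letI := structI Lcap L' i SA
    letI := structI Lcap L' i SB
    simp only [Formula.realize_rel, Term.realize_var] at h4
    have hTS : (fun j => @Term.realize _ B SB _ (Sum.elim (f ∘ v) (f ∘ xs)) (ts j))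
        = fun j => f (@Term.realize _ A SA _ (Sum.elim v xs) (ts j)) := by
      funext j
      rw [term_map hfi (ts j) (Sum.elim v xs), helim]
    show @Structure.RelMap _ A (structI Lcap L' i SA) l R'
        (fun j => @Term.realize _ A SA _ (Sum.elim v xs) (ts j)) ↔
      @Structure.RelMap _ B (structI Lcap L' i SB) l R'
        (fun j => @Term.realize _ B SB _ (Sum.elim (f ∘ v) (f ∘ xs)) (ts j))
    rw [hTS]
    exact h4
  | @imp n φ₁ φ₂ ih₁ ih₂ =>
    intro A B SA SB hA hB f hfi v xs
    exact imp_congr (ih₁ A B SA SB hA hB f hfi v xs) (ih₂ A B SA SB hA hB f hfi v xs)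
  | @all n ψ ih =>
    intro A B SA SB hA hB f hfi v xs
    show (∀ b : A, @BoundedFormula.Realize _ A SA _ _ ψ v (Fin.snoc xs b)) ↔
      (∀ c : B, @BoundedFormula.Realize _ B SB _ _ ψ (f ∘ v) (Fin.snoc (f ∘ xs) c))
    constructor
    · intro hall c
      haveI : Nonempty A := (hfi (Classical.arbitrary ι)).nonempty_iff.mpr ⟨c⟩
      have hintA : Interpolative Lcap L' SA := ((hstar A SA).mp hA).2
      obtain ⟨P, SP, g, hgi, hge⟩ := zigzag hfi hintA
      have hP : ModelsWith (unionLang Lcap L') SP Tstar := by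
        letI := SA
        letI := SP
        have hA2 : ∀ σ ∈ Tstar, A ⊨ σ := (Theory.model_iff (M := A) Tstar).mp hA
        refine (Theory.model_iff (M := P) Tstar).mpr fun σ hσ => ?_
        have h6 := hge.realize_iff' σ (default : Empty → A)
        have h7 : (g ∘ f) ∘ (default : Empty → A) = (default : Empty → P) :=
          funext fun x => x.elim
        rw [h7] at h6
        exact h6.mp (hA2 σ hσ)
      have hIH := ih B P SB SP hB hP g hgi (f ∘ v) (Fin.snoc (f ∘ xs) c)
      apply hIH.mpr
      have hAll2 := (hge.realize_bf (BoundedFormula.all ψ) v xs).mp hall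
      have hAll3 := hAll2 (g c)
      have hsnoc : Fin.snoc ((g ∘ f) ∘ xs) (g c) = g ∘ Fin.snoc (f ∘ xs) c := by
        rw [Fin.comp_snoc]
        rfl
      rw [hsnoc] at hAll3
      exact hAll3
    · intro hallB b
      apply (ih A B SA SB hA hB f hfi v (Fin.snoc xs b)).mpr
      have h5 := hallB (f b)
      have hsnoc : Fin.snoc (f ∘ xs) (f b) = f ∘ Fin.snoc xs b := (Fin.comp_snoc f xs b).symm
      rw [hsnoc] at h5
      exact h5

end Aux

end InterpolativeFusion

open InterpolativeFusion FirstOrder FirstOrder.Language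

/-- Suppose the interpolative fusion `T∪*` exists (i.e. some theory `Tstar` axiomatizes the class
of interpolative `T∪`-models), `M∪` and `N∪` are models of `T∪*`, and `M i` is an elementary
substructure of `N i` for all `i`.  Then `M∪` is an elementary substructure of `N∪`. -/
theorem elementary_of_models_fusion
    {ι : Type*} [Nonempty ι] (Lcap : Language) (L' : ι → Language)
    (T : ∀ i : ι, (langI Lcap L' i).Theory)
    (hcons : SameCapConsequences Lcap L' T)
    (Tstar : (unionLang Lcap L').Theory)
    (hstar : AxiomatizesInterpolative.{w} Lcap L' T Tstar)
    (M N : Type w) (SM : (unionLang Lcap L').Structure M)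
    (SN : (unionLang Lcap L').Structure N)
    (hM : ModelsWith (unionLang Lcap L') SM Tstar)
    (hN : ModelsWith (unionLang Lcap L') SN Tstar)
    (f : M → N)
    (hf : ∀ i : ι, IsElementaryWith (langI Lcap L' i) (structI Lcap L' i SM)
      (structI Lcap L' i SN) f) :
    IsElementaryWith (unionLang Lcap L') SM SN f := by
  intro k φ a
  have h2 := transfer_all hstar φ M N SM SN hM hN f hf a (default : Fin 0 → M)
  have h3 : f ∘ (default : Fin 0 → M) = (default : Fin 0 → N) := Subsingleton.elim _ _
  rw [h3] at h2
  exact h2
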